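/- arXiv:1208.2157 — 2 statements merged into one kernel-verified Lean document; each statement's English description precedes it below -/
import Mathlib

section
/- Let π_ε(z) = f(εx|θ)f(θ)exp(−ρ(x))/C(ε) with C(ε) = ∫ f(εx|θ)f(θ)exp(−ρ(x)) dz, where f(·|θ) is continuously differentiable in x with uniformly bounded partial derivatives (bound M), f(θ) is a probability density, and ρ(x) = Σ|xᵢ| (so exp(−ρ) is integrable with ∫‖x‖₁exp(−ρ(x))dx < ∞). Assume C(ε) ≥ C₀ > 0 for ε in an interval [0,ε̄]. Then there exists a constant K such that ‖π_ε − π_{ε'}‖_TV ≤ K·|ε − ε'| for all ε, ε' ∈ [0,ε̄]. Consequently, for any monotone sequence ε_k ↓ 0, Σ_k ‖π_{ε_{k+1}} − π_{ε_k}‖_TV < ∞. -/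
open MeasureTheory

lemma keyLip {n : ℕ} {Θ : Type*} (g : (Fin n → ℝ) → Θ → ℝ) (M' : ℝ)
    (hdiff : ∀ θ, ContDiff ℝ 1 (fun x => g x θ))
    (hb : ∀ θ (x : Fin n → ℝ) (i : Fin n),
      |fderiv ℝ (fun x => g x θ) x (Pi.single i 1)| ≤ M')
    (θ : Θ) (x : Fin n → ℝ) (ε ε' : ℝ) :
    |g (ε • x) θ - g (ε' • x) θ| ≤ M' * (∑ i, |x i|) * |ε - ε'| := by
  have hder : ∀ t : ℝ, HasDerivAt (fun t : ℝ => g (t • x) θ)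
      ((fderiv ℝ (fun x => g x θ) (t • x)) x) t := by
    intro t
    have hx : HasDerivAt (fun t : ℝ => t • x) x t := by
      simpa using (hasDerivAt_id t).smul_const x
    have hg : HasFDerivAt (fun x => g x θ) (fderiv ℝ (fun x => g x θ) (t • x)) (t • x) :=
      (((hdiff θ).differentiable one_ne_zero) (t • x)).hasFDerivAt
    exact hg.comp_hasDerivAt t hx
  have hbd : ∀ t : ℝ, ‖deriv (fun t : ℝ => g (t • x) θ) t‖ ≤ M' * (∑ i, |x i|) := by
    intro t
    rw [(hder t).deriv]
    set L := fderiv ℝ (fun x => g x θ) (t • x) with hL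
    have hx : x = ∑ i, (x i) • (Pi.single i (1 : ℝ) : Fin n → ℝ) := by
      funext j
      simp [Finset.sum_apply, Pi.single_apply, mul_ite, Finset.sum_ite_eq]
    have : L x = ∑ i, (x i) * L (Pi.single i 1) := by
      conv_lhs => rw [hx]
      rw [map_sum]
      congr 1; ext i
      rw [L.map_smul]; simp
    rw [Real.norm_eq_abs, this]
    calc |∑ i, (x i) * L (Pi.single i 1)| ≤ ∑ i, |(x i) * L (Pi.single i 1)| :=
          Finset.abs_sum_le_sum_abs _ _
      _ ≤ ∑ i, |x i| * M' := by
          refine Finset.sum_le_sum fun i _ => ?_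
          rw [abs_mul]
          exact mul_le_mul_of_nonneg_left (hb θ (t • x) i) (abs_nonneg _)
      _ = M' * (∑ i, |x i|) := by rw [← Finset.sum_mul]; ring
  have := Convex.norm_image_sub_le_of_norm_deriv_le
    (f := fun t : ℝ => g (t • x) θ) (s := Set.univ)
    (fun t _ => (hder t).differentiableAt) (fun t _ => hbd t)
    convex_univ (Set.mem_univ ε') (Set.mem_univ ε)
  simpa [Real.norm_eq_abs, abs_sub_comm ε ε'] using this
/-- Lipschitz continuity in `ε` of the scaled equilibrium distributions
`π_ε(θ,x) = f(εx|θ)f(θ)exp(−ρ(x))/C(ε)` in total variation, and summability of TV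
increments along any monotone schedule `ε_k ↓ 0`. Here `ρ(x) = Σᵢ|xᵢ|`. -/
theorem stmt_8 {n : ℕ} {Θ : Type*} [MeasurableSpace Θ] (νm : Measure Θ)
    (g : (Fin n → ℝ) → Θ → ℝ) (fθ : Θ → ℝ) (M : ℝ)
    (hdiff : ∀ θ, ContDiff ℝ 1 (fun x => g x θ))
    (hbound : ∀ θ (x : Fin n → ℝ) (i : Fin n),
      |fderiv ℝ (fun x => g x θ) x (Pi.single i 1)| ≤ M)
    (hfθ0 : ∀ θ, 0 ≤ fθ θ) (hfθ1 : ∫ θ, fθ θ ∂νm = 1)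
    (hint : Integrable
      (fun x : Fin n → ℝ => (∑ i, |x i|) * Real.exp (-(∑ i, |x i|))) volume)
    (C : ℝ → ℝ)
    (hC : C = fun ε => ∫ z : Θ × (Fin n → ℝ),
      g (ε • z.2) z.1 * fθ z.1 * Real.exp (-(∑ i, |z.2 i|)) ∂(νm.prod volume))
    (π : ℝ → Θ × (Fin n → ℝ) → ℝ)
    (hπ : π = fun ε z =>
      g (ε • z.2) z.1 * fθ z.1 * Real.exp (-(∑ i, |z.2 i|)) / C ε)
    (εbar C₀ : ℝ) (hεbar : 0 ≤ εbar) (hC₀ : 0 < C₀)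
    (hClower : ∀ ε ∈ Set.Icc 0 εbar, C₀ ≤ C ε) :
    ∃ K : ℝ,
      (∀ ε ∈ Set.Icc 0 εbar, ∀ ε' ∈ Set.Icc 0 εbar,
        (1 / 2) * ∫ z, |π ε z - π ε' z| ∂(νm.prod volume) ≤ K * |ε - ε'|) ∧
      ∀ εs : ℕ → ℝ, Antitone εs → (∀ k, εs k ∈ Set.Icc 0 εbar) →
        Filter.Tendsto εs Filter.atTop (nhds 0) →
        Summable fun k =>
          (1 / 2) * ∫ z, |π (εs (k + 1)) z - π (εs k) z| ∂(νm.prod volume) := by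
  set μ : Measure (Θ × (Fin n → ℝ)) := νm.prod volume with hμ
  set M' := max M 0 with hM'
  have hM'0 : 0 ≤ M' := le_max_right _ _
  have hb' : ∀ θ (x : Fin n → ℝ) (i : Fin n),
      |fderiv ℝ (fun x => g x θ) x (Pi.single i 1)| ≤ M' :=
    fun θ x i => (hbound θ x i).trans (le_max_left _ _)
  set a : ℝ → Θ × (Fin n → ℝ) → ℝ :=
    fun ε z => g (ε • z.2) z.1 * fθ z.1 * Real.exp (-(∑ i, |z.2 i|)) with ha
  have hCa : ∀ ε, C ε = ∫ z, a ε z ∂μ := fun ε => by rw [hC]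
  have hfθint : Integrable fθ νm := by
    by_contra h
    rw [integral_undef h] at hfθ1
    norm_num at hfθ1
  set F : Θ × (Fin n → ℝ) → ℝ :=
    fun z => fθ z.1 * ((∑ i, |z.2 i|) * Real.exp (-(∑ i, |z.2 i|))) with hF
  have hFint : Integrable F μ := hfθint.mul_prod hint
  have hFnn : ∀ z, 0 ≤ F z := fun z =>
    mul_nonneg (hfθ0 _) (mul_nonneg (Finset.sum_nonneg fun i _ => abs_nonneg _)
      (Real.exp_pos _).le)
  set I := ∫ z, F z ∂μ with hI
  have hInn : 0 ≤ I := integral_nonneg hFnn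
  have haint : ∀ ε ∈ Set.Icc (0:ℝ) εbar, Integrable (a ε) μ := by
    intro ε hε
    by_contra h
    have h1 := hClower ε hε
    rw [hCa ε, integral_undef h] at h1
    linarith
  have hlip : ∀ ε ε' z, |a ε z - a ε' z| ≤ M' * |ε - ε'| * F z := by
    intro ε ε' z
    have h1 := keyLip g M' hdiff hb' z.1 z.2 ε ε'
    have h2 : a ε z - a ε' z
        = (g (ε • z.2) z.1 - g (ε' • z.2) z.1) * (fθ z.1 * Real.exp (-(∑ i, |z.2 i|))) := by
      simp only [ha]; ring
    rw [h2, abs_mul, abs_of_nonneg (mul_nonneg (hfθ0 _) (Real.exp_pos _).le)]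
    calc |g (ε • z.2) z.1 - g (ε' • z.2) z.1| * (fθ z.1 * Real.exp (-(∑ i, |z.2 i|)))
        ≤ (M' * (∑ i, |z.2 i|) * |ε - ε'|) * (fθ z.1 * Real.exp (-(∑ i, |z.2 i|))) :=
          mul_le_mul_of_nonneg_right h1 (mul_nonneg (hfθ0 _) (Real.exp_pos _).le)
      _ = M' * |ε - ε'| * F z := by simp only [hF]; ring
  have hCpos : ∀ ε ∈ Set.Icc (0:ℝ) εbar, 0 < C ε :=
    fun ε hε => lt_of_lt_of_le hC₀ (hClower ε hε)
  have habs : ∀ ε ∈ Set.Icc (0:ℝ) εbar, ∀ ε' ∈ Set.Icc (0:ℝ) εbar,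
      ∫ z, |a ε z - a ε' z| ∂μ ≤ M' * |ε - ε'| * I := by
    intro ε hε ε' hε'
    calc ∫ z, |a ε z - a ε' z| ∂μ ≤ ∫ z, M' * |ε - ε'| * F z ∂μ :=
          integral_mono ((haint ε hε).sub (haint ε' hε')).abs
            (hFint.const_mul _) (fun z => hlip ε ε' z)
      _ = M' * |ε - ε'| * I := by rw [integral_const_mul]
  have hCdiff : ∀ ε ∈ Set.Icc (0:ℝ) εbar, ∀ ε' ∈ Set.Icc (0:ℝ) εbar,
      |C ε - C ε'| ≤ M' * |ε - ε'| * I := by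
    intro ε hε ε' hε'
    rw [hCa ε, hCa ε', ← integral_sub (haint ε hε) (haint ε' hε')]
    refine le_trans ?_ (habs ε hε ε' hε')
    simpa [Real.norm_eq_abs] using
      norm_integral_le_integral_norm (μ := μ) (fun z => a ε z - a ε' z)
  have ha0 : Integrable (a 0) μ := haint 0 ⟨le_rfl, hεbar⟩
  set A := (∫ z, |a 0 z| ∂μ) + M' * εbar * I with hA
  have hAbound : ∀ ε' ∈ Set.Icc (0:ℝ) εbar, ∫ z, |a ε' z| ∂μ ≤ A := by
    intro ε' hε'
    calc ∫ z, |a ε' z| ∂μ ≤ ∫ z, (|a 0 z| + M' * εbar * F z) ∂μ := by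
          refine integral_mono (haint ε' hε').abs
            (ha0.abs.add (hFint.const_mul _)) (fun z => ?_)
          have h2 := hlip ε' 0 z
          rw [sub_zero, abs_of_nonneg hε'.1] at h2
          have h3 : M' * ε' * F z ≤ M' * εbar * F z :=
            mul_le_mul_of_nonneg_right
              (mul_le_mul_of_nonneg_left hε'.2 hM'0) (hFnn z)
          calc |a ε' z| = |a 0 z + (a ε' z - a 0 z)| := by ring_nf
            _ ≤ |a 0 z| + |a ε' z - a 0 z| := abs_add_le _ _
            _ ≤ |a 0 z| + M' * εbar * F z := by linarith
      _ = A := by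
          rw [integral_add ha0.abs (hFint.const_mul _), integral_const_mul]
  have hA0 : 0 ≤ A :=
    le_trans (integral_nonneg fun z => abs_nonneg _) (hAbound 0 ⟨le_rfl, hεbar⟩)
  set K := (1/2) * (M' * I / C₀ + M' * I * A / C₀^2) with hK
  have hK0 : 0 ≤ K := by positivity
  have hTV : ∀ ε ∈ Set.Icc (0:ℝ) εbar, ∀ ε' ∈ Set.Icc (0:ℝ) εbar,
      (1 / 2) * ∫ z, |π ε z - π ε' z| ∂μ ≤ K * |ε - ε'| := by
      intro ε hε ε' hε'
      have hCe := hCpos ε hε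
      have hCe' := hCpos ε' hε'
      set δ := |ε - ε'| with hδ
      have hδ0 : 0 ≤ δ := abs_nonneg _
      have hπa : ∀ ε₀, π ε₀ = fun z => a ε₀ z / C ε₀ := fun ε₀ => by rw [hπ]
      have hpt : ∀ z, |π ε z - π ε' z|
          ≤ |a ε z - a ε' z| * (1 / C ε) + |a ε' z| * (|C ε - C ε'| / (C ε * C ε')) := by
        intro z
        rw [hπa ε, hπa ε']
        have hid : a ε z / C ε - a ε' z / C ε'
            = (a ε z - a ε' z) / C ε + a ε' z * ((C ε' - C ε) / (C ε * C ε')) := by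
          field_simp
          ring
        rw [hid]
        calc |(a ε z - a ε' z) / C ε + a ε' z * ((C ε' - C ε) / (C ε * C ε'))|
            ≤ |(a ε z - a ε' z) / C ε| + |a ε' z * ((C ε' - C ε) / (C ε * C ε'))| :=
              abs_add_le _ _
          _ = |a ε z - a ε' z| * (1 / C ε)
              + |a ε' z| * (|C ε - C ε'| / (C ε * C ε')) := by
              rw [abs_div, abs_mul, abs_div, abs_of_pos hCe,
                abs_of_pos (mul_pos hCe hCe'), abs_sub_comm (C ε') (C ε)]
              ring
      have hπint : Integrable (fun z => |π ε z - π ε' z|) μ := by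
        rw [hπa ε, hπa ε']
        exact (((haint ε hε).div_const _).sub ((haint ε' hε').div_const _)).abs
      have hsub : Integrable (fun z => a ε z - a ε' z) μ := (haint ε hε).sub (haint ε' hε')
      have habs' : Integrable (fun z => |a ε' z|) μ := (haint ε' hε').abs
      have hmain : ∫ z, |π ε z - π ε' z| ∂μ
          ≤ (M' * δ * I) * (1 / C₀) + A * ((M' * δ * I) / C₀^2) := by
        calc ∫ z, |π ε z - π ε' z| ∂μ
            ≤ ∫ z, (|a ε z - a ε' z| * (1 / C ε)
                + |a ε' z| * (|C ε - C ε'| / (C ε * C ε'))) ∂μ :=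
              integral_mono hπint
                ((hsub.abs.mul_const _).add (habs'.mul_const _)) hpt
          _ = (∫ z, |a ε z - a ε' z| ∂μ) * (1 / C ε)
              + (∫ z, |a ε' z| ∂μ) * (|C ε - C ε'| / (C ε * C ε')) := by
              rw [integral_add (hsub.abs.mul_const _) (habs'.mul_const _),
                integral_mul_const, integral_mul_const]
          _ ≤ (M' * δ * I) * (1 / C₀) + A * ((M' * δ * I) / C₀^2) := by
              have t1 : (∫ z, |a ε z - a ε' z| ∂μ) * (1 / C ε) ≤ (M' * δ * I) * (1 / C₀) :=
                mul_le_mul (habs ε hε ε' hε')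
                  (by gcongr; exact hClower ε hε)
                  (by positivity) (by positivity)
              have t2 : (∫ z, |a ε' z| ∂μ) * (|C ε - C ε'| / (C ε * C ε'))
                  ≤ A * ((M' * δ * I) / C₀^2) := by
                refine mul_le_mul (hAbound ε' hε') ?_
                  (by positivity) hA0
                refine div_le_div₀ (by positivity) (hCdiff ε hε ε' hε')
                  (by positivity) ?_
                have : C₀ * C₀ ≤ C ε * C ε' :=
                  mul_le_mul (hClower ε hε) (hClower ε' hε') hC₀.le hCe.le
                nlinarith
              linarith
      have hKδ : K * δ = (1/2) * ((M' * δ * I) * (1 / C₀) + A * ((M' * δ * I) / C₀^2)) := by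
        rw [hK]; ring
      rw [hKδ]
      linarith [hmain]
  refine ⟨K, hTV, ?_⟩
  intro εs hmono hmem htend
  have hterm0 : ∀ k, 0 ≤ (1 / 2) * ∫ z, |π (εs (k + 1)) z - π (εs k) z| ∂μ :=
    fun k => mul_nonneg (by norm_num) (integral_nonneg fun z => abs_nonneg _)
  have htel : Summable (fun k => εs k - εs (k + 1)) := by
    refine summable_of_sum_range_le
      (fun k => sub_nonneg.2 (hmono (Nat.le_succ k))) (fun m => ?_) (c := εs 0)
    rw [Finset.sum_range_sub' εs m]
    have := (hmem m).1
    linarith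
  refine Summable.of_nonneg_of_le hterm0 (fun k => ?_) (htel.mul_left K)
  have hb1 := hTV (εs (k + 1)) (hmem (k + 1)) (εs k) (hmem k)
  have habseq : |εs (k + 1) - εs k| = εs k - εs (k + 1) := by
    rw [abs_sub_comm]
    exact abs_of_nonneg (sub_nonneg.2 (hmono (Nat.le_succ k)))
  rw [habseq] at hb1
  linarith [hb1]
end

section
/- Let ε^e(U) ∈ (0,U) be the unique solution of (U² − e²)²/(2e³) = v/γ for U > 0 (v, γ > 0 fixed). Then ε^e(U) = (γ/(2v))^{1/3} U^{4/3} + O(U²) as U → 0⁺; in particular ε^e(U)/U^{4/3} → (γ/(2v))^{1/3}. -/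
open Filter

set_option maxHeartbeats 1000000

lemma cube_rpow (x : ℝ) (hx : 0 ≤ x) : (x ^ ((1:ℝ)/3)) ^ (3:ℕ) = x := by
  rw [← Real.rpow_natCast (x ^ _) 3, ← Real.rpow_mul hx]; norm_num

lemma diff_rpow_le (a b : ℝ) (hb : 0 < b) (hba : b ≤ a) :
    a ^ ((2:ℝ)/3) - b ^ ((2:ℝ)/3) ≤ (a - b) / b ^ ((1:ℝ)/3) := by
  have ha : 0 < a := hb.trans_le hba
  set x := a ^ ((1:ℝ)/3) with hxd
  set y := b ^ ((1:ℝ)/3) with hyd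
  have hx : 0 < x := Real.rpow_pos_of_pos ha _
  have hy : 0 < y := Real.rpow_pos_of_pos hb _
  have hxy : y ≤ x := Real.rpow_le_rpow hb.le hba (by norm_num)
  have hax : a = x ^ (3:ℕ) := (cube_rpow a ha.le).symm
  have hby : b = y ^ (3:ℕ) := (cube_rpow b hb.le).symm
  have ha2 : a ^ ((2:ℝ)/3) = x ^ (2:ℕ) := by
    rw [hxd, ← Real.rpow_natCast (a ^ _) 2, ← Real.rpow_mul ha.le]; norm_num
  have hb2 : b ^ ((2:ℝ)/3) = y ^ (2:ℕ) := by
    rw [hyd, ← Real.rpow_natCast (b ^ _) 2, ← Real.rpow_mul hb.le]; norm_num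
  rw [ha2, hb2, le_div_iff₀ hy]
  nlinarith [mul_nonneg (sq_nonneg x) (sub_nonneg.2 hxy)]

lemma key_bound (v γ : ℝ) (hv : 0 < v) (hγ : 0 < γ) (U e : ℝ) (hU : 0 < U)
    (he0 : 0 < e) (heU : e < U)
    (heq : (U ^ 2 - e ^ 2) ^ 2 / (2 * e ^ 3) = v / γ)
    (hsmall : ((γ/(2*v)) ^ ((1:ℝ)/3)) ^ 2 * U ^ ((2:ℝ)/3) ≤ 1/2) :
    |e - (γ/(2*v)) ^ ((1:ℝ)/3) * U ^ ((4:ℝ)/3)| ≤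
      2 ^ ((1:ℝ)/3) * (γ/(2*v)) * U ^ 2 := by
  obtain ⟨K, hKd⟩ : ∃ K : ℝ, K = 2*v/γ := ⟨_, rfl⟩
  obtain ⟨c, hcd⟩ : ∃ c : ℝ, c = (γ/(2*v)) ^ ((1:ℝ)/3) := ⟨_, rfl⟩
  rw [← hcd] at hsmall ⊢
  have hK : 0 < K := by rw [hKd]; positivity
  have hKinv : γ/(2*v) = K⁻¹ := by rw [hKd, inv_div]
  have hc_pos : 0 < c := by rw [hcd]; positivity
  have hcK : c = (K ^ ((1:ℝ)/3))⁻¹ := by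
    rw [hcd, hKinv, Real.inv_rpow hK.le]
  have hKpow : 0 < K ^ ((1:ℝ)/3) := Real.rpow_pos_of_pos hK _
  have hb : 0 < U^2 - e^2 := by nlinarith
  have he3 : (0:ℝ) < e^3 := by positivity
  have heq2 : e ^ (3:ℕ) = (U^2-e^2)^2 / K := by
    rw [hKd]
    field_simp at heq ⊢
    linarith [heq]
  have he_eq : e = (U^2 - e^2) ^ ((2:ℝ)/3) / K ^ ((1:ℝ)/3) := by
    have h1 : e = ((e ^ (3:ℕ) : ℝ)) ^ ((1:ℝ)/3) := by
      rw [← Real.rpow_natCast e 3, ← Real.rpow_mul he0.le]; norm_num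
    conv_lhs => rw [h1, heq2]
    rw [Real.div_rpow (by positivity) hK.le,
      ← Real.rpow_natCast (U^2-e^2) 2, ← Real.rpow_mul hb.le]
    norm_num
  have hU43 : (U^2 : ℝ) ^ ((2:ℝ)/3) = U ^ ((4:ℝ)/3) := by
    rw [← Real.rpow_natCast U 2, ← Real.rpow_mul hU.le]; norm_num
  have hcU : c * U ^ ((4:ℝ)/3) = (U^2) ^ ((2:ℝ)/3) / K ^ ((1:ℝ)/3) := by
    rw [← hU43, hcK]; ring
  have hle : e ≤ c * U ^ ((4:ℝ)/3) := by
    calc e = (U^2-e^2) ^ ((2:ℝ)/3) / K ^ ((1:ℝ)/3) := he_eq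
      _ ≤ (U^2) ^ ((2:ℝ)/3) / K ^ ((1:ℝ)/3) := by gcongr <;> nlinarith [sq_nonneg e]
      _ = c * U ^ ((4:ℝ)/3) := hcU.symm
  have hU83 : U ^ ((8:ℝ)/3) = U ^ ((2:ℝ)/3) * U^2 := by
    rw [← Real.rpow_natCast U 2, ← Real.rpow_add hU]; norm_num
  have he2 : e^2 ≤ c^2 * U ^ ((8:ℝ)/3) := by
    have h := pow_le_pow_left₀ he0.le hle 2
    calc e^2 ≤ (c * U ^ ((4:ℝ)/3))^2 := h
      _ = c^2 * (U ^ ((4:ℝ)/3))^2 := by ring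
      _ = c^2 * U ^ ((8:ℝ)/3) := by
          rw [← Real.rpow_natCast (U ^ _) 2, ← Real.rpow_mul hU.le]; norm_num
  have hb_half : U^2/2 ≤ U^2 - e^2 := by
    have h1 : c^2 * U ^ ((2:ℝ)/3) * U^2 ≤ (1/2) * U^2 :=
      mul_le_mul_of_nonneg_right hsmall (sq_nonneg U)
    nlinarith [he2, hU83]
  have hbpow_pos : 0 < (U^2-e^2) ^ ((1:ℝ)/3) := Real.rpow_pos_of_pos hb _
  have hUpow_pos : 0 < U ^ ((2:ℝ)/3) := Real.rpow_pos_of_pos hU _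
  have h2pow : (0:ℝ) < 2 ^ ((1:ℝ)/3) := by positivity
  have hdiff : c * U ^ ((4:ℝ)/3) - e ≤ e^2 / (U^2-e^2) ^ ((1:ℝ)/3) / K ^ ((1:ℝ)/3) := by
    calc c * U ^ ((4:ℝ)/3) - e
        = ((U^2) ^ ((2:ℝ)/3) - (U^2-e^2) ^ ((2:ℝ)/3)) / K ^ ((1:ℝ)/3) := by
          rw [hcU, sub_div, ← he_eq]
      _ ≤ ((U^2 - (U^2-e^2)) / (U^2-e^2) ^ ((1:ℝ)/3)) / K ^ ((1:ℝ)/3) := by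
          gcongr
          exact diff_rpow_le _ _ hb (by nlinarith)
      _ = e^2 / (U^2-e^2) ^ ((1:ℝ)/3) / K ^ ((1:ℝ)/3) := by
          have h9 : U^2 - (U^2-e^2) = e^2 := by ring
          rw [h9]
  have hbpow : U ^ ((2:ℝ)/3) / 2 ^ ((1:ℝ)/3) ≤ (U^2-e^2) ^ ((1:ℝ)/3) := by
    have h14 : (U^2/2:ℝ) ^ ((1:ℝ)/3) ≤ (U^2-e^2) ^ ((1:ℝ)/3) :=
      Real.rpow_le_rpow (by positivity) hb_half (by norm_num)
    calc U ^ ((2:ℝ)/3) / 2 ^ ((1:ℝ)/3)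
        = (U^2/2:ℝ) ^ ((1:ℝ)/3) := by
          rw [Real.div_rpow (sq_nonneg U) (by norm_num),
            ← Real.rpow_natCast U 2, ← Real.rpow_mul hU.le]
          norm_num
      _ ≤ _ := h14
  have hmain : e^2 / (U^2-e^2) ^ ((1:ℝ)/3) ≤ 2 ^ ((1:ℝ)/3) * c^2 * U^2 := by
    calc e^2 / (U^2-e^2) ^ ((1:ℝ)/3)
        ≤ (c^2 * U ^ ((8:ℝ)/3)) / (U ^ ((2:ℝ)/3) / 2 ^ ((1:ℝ)/3)) := by
          apply div_le_div₀ (by positivity) he2 (by positivity) hbpow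
      _ = 2 ^ ((1:ℝ)/3) * c^2 * (U ^ ((8:ℝ)/3) / U ^ ((2:ℝ)/3)) := by
          rw [div_div_eq_mul_div]; ring
      _ = 2 ^ ((1:ℝ)/3) * c^2 * U^2 := by
          rw [hU83, mul_comm (U ^ ((2:ℝ)/3)), mul_div_assoc,
            div_self hUpow_pos.ne', mul_one]
  have hc3 : c^2 * (K ^ ((1:ℝ)/3))⁻¹ = γ/(2*v) := by
    rw [← hcK]
    have h3 : c ^ (3:ℕ) = γ/(2*v) := by rw [hcd]; exact cube_rpow _ (by positivity)
    rw [← h3]; ring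
  have habs : |e - c * U ^ ((4:ℝ)/3)| = c * U ^ ((4:ℝ)/3) - e := by
    rw [abs_sub_comm, abs_of_nonneg (by linarith)]
  rw [habs]
  calc c * U ^ ((4:ℝ)/3) - e
      ≤ e^2 / (U^2-e^2) ^ ((1:ℝ)/3) / K ^ ((1:ℝ)/3) := hdiff
    _ ≤ (2 ^ ((1:ℝ)/3) * c^2 * U^2) / K ^ ((1:ℝ)/3) := by gcongr
    _ = 2 ^ ((1:ℝ)/3) * (c^2 * (K ^ ((1:ℝ)/3))⁻¹) * U^2 := by ring
    _ = 2 ^ ((1:ℝ)/3) * (γ/(2*v)) * U^2 := by rw [hc3]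


/-- Asymptotics of the optimal cooling schedule: the unique solution `ε^e(U) ∈ (0,U)` of
`(U² − e²)²/(2e³) = v/γ` satisfies `ε^e(U) = (γ/(2v))^{1/3} U^{4/3} + O(U²)` as `U → 0⁺`;
in particular `ε^e(U)/U^{4/3} → (γ/(2v))^{1/3}`. -/
theorem stmt_17 (v γ : ℝ) (hv : 0 < v) (hγ : 0 < γ)
    (εe : ℝ → ℝ)
    (hεe : ∀ U : ℝ, 0 < U → εe U ∈ Set.Ioo 0 U ∧
      (U ^ 2 - εe U ^ 2) ^ 2 / (2 * εe U ^ 3) = v / γ) :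
    Tendsto (fun U => εe U / U ^ ((4:ℝ) / 3)) (nhdsWithin 0 (Set.Ioi 0))
        (nhds ((γ / (2 * v)) ^ ((1:ℝ) / 3))) ∧
      (fun U => εe U - (γ / (2 * v)) ^ ((1:ℝ) / 3) * U ^ ((4:ℝ) / 3)) =O[nhdsWithin 0 (Set.Ioi 0)]
        (fun U => U ^ 2) := by
  have hcpos : (0:ℝ) < (γ / (2 * v)) ^ ((1:ℝ)/3) := Real.rpow_pos_of_pos (by positivity) _
  -- eventual smallness
  have htpow : Tendsto (fun U : ℝ => U ^ ((2:ℝ)/3)) (nhdsWithin 0 (Set.Ioi 0)) (nhds 0) := by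
    have h := (Real.continuousAt_rpow_const 0 ((2:ℝ)/3) (Or.inr (by norm_num))).tendsto
    rw [Real.zero_rpow (by norm_num)] at h
    exact h.mono_left nhdsWithin_le_nhds
  have hsm : ∀ᶠ U in nhdsWithin (0:ℝ) (Set.Ioi 0),
      ((γ/(2*v)) ^ ((1:ℝ)/3)) ^ 2 * U ^ ((2:ℝ)/3) ≤ 1/2 := by
    have h0 := htpow.const_mul (((γ/(2*v)) ^ ((1:ℝ)/3)) ^ 2)
    rw [mul_zero] at h0
    exact (h0.eventually_lt_const (by norm_num : (0:ℝ) < 1/2)).mono fun x hx => hx.le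
  have hbound : ∀ᶠ U in nhdsWithin (0:ℝ) (Set.Ioi 0),
      |εe U - (γ/(2*v)) ^ ((1:ℝ)/3) * U ^ ((4:ℝ)/3)| ≤
        2 ^ ((1:ℝ)/3) * (γ/(2*v)) * U ^ 2 := by
    filter_upwards [hsm, self_mem_nhdsWithin] with U h2 hU
    have hU : (0:ℝ) < U := hU
    obtain ⟨⟨he0, heU⟩, heq⟩ := hεe U hU
    exact key_bound v γ hv hγ U (εe U) hU he0 heU heq h2
  constructor
  · -- Tendsto part
    have hb2 : ∀ᶠ U in nhdsWithin (0:ℝ) (Set.Ioi 0),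
        |εe U / U ^ ((4:ℝ)/3) - (γ/(2*v)) ^ ((1:ℝ)/3)| ≤
          2 ^ ((1:ℝ)/3) * (γ/(2*v)) * U ^ ((2:ℝ)/3) := by
      filter_upwards [hbound, self_mem_nhdsWithin] with U h1 hU
      have hU : (0:ℝ) < U := hU
      have hU43 : (0:ℝ) < U ^ ((4:ℝ)/3) := Real.rpow_pos_of_pos hU _
      have key : εe U / U ^ ((4:ℝ)/3) - (γ/(2*v)) ^ ((1:ℝ)/3) =
          (εe U - (γ/(2*v)) ^ ((1:ℝ)/3) * U ^ ((4:ℝ)/3)) / U ^ ((4:ℝ)/3) := by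
        field_simp
      rw [key, abs_div, abs_of_pos hU43]
      have hpow : U ^ 2 / U ^ ((4:ℝ)/3) = U ^ ((2:ℝ)/3) := by
        rw [← Real.rpow_natCast U 2, ← Real.rpow_sub hU]
        norm_num
      calc |εe U - (γ/(2*v)) ^ ((1:ℝ)/3) * U ^ ((4:ℝ)/3)| / U ^ ((4:ℝ)/3)
          ≤ (2 ^ ((1:ℝ)/3) * (γ/(2*v)) * U ^ 2) / U ^ ((4:ℝ)/3) := by gcongr
        _ = 2 ^ ((1:ℝ)/3) * (γ/(2*v)) * (U ^ 2 / U ^ ((4:ℝ)/3)) := by ring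
        _ = 2 ^ ((1:ℝ)/3) * (γ/(2*v)) * U ^ ((2:ℝ)/3) := by rw [hpow]
    have hconst : Tendsto (fun U : ℝ => 2 ^ ((1:ℝ)/3) * (γ/(2*v)) * U ^ ((2:ℝ)/3))
        (nhdsWithin 0 (Set.Ioi 0)) (nhds 0) := by
      have h0 := htpow.const_mul (2 ^ ((1:ℝ)/3) * (γ/(2*v)))
      rwa [mul_zero] at h0
    have habs0 : Tendsto (fun U => |εe U / U ^ ((4:ℝ)/3) - (γ/(2*v)) ^ ((1:ℝ)/3)|)
        (nhdsWithin 0 (Set.Ioi 0)) (nhds 0) :=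
      squeeze_zero' (Eventually.of_forall fun _ => abs_nonneg _) hb2 hconst
    have hsub : Tendsto (fun U => εe U / U ^ ((4:ℝ)/3) - (γ/(2*v)) ^ ((1:ℝ)/3))
        (nhdsWithin 0 (Set.Ioi 0)) (nhds 0) := by
      rw [tendsto_zero_iff_norm_tendsto_zero]
      simpa [Real.norm_eq_abs] using habs0
    have := hsub.add_const ((γ/(2*v)) ^ ((1:ℝ)/3))
    simpa using this
  · -- IsBigO part
    rw [Asymptotics.isBigO_iff]
    refine ⟨2 ^ ((1:ℝ)/3) * (γ/(2*v)), ?_⟩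
    filter_upwards [hbound, self_mem_nhdsWithin] with U h1 hU
    have hU : (0:ℝ) < U := hU
    rw [Real.norm_eq_abs, Real.norm_eq_abs, abs_of_nonneg (sq_nonneg U)]
    exact h1
end
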